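/- Let $(X,d)$ and $(Y,\rho)$ be complete metric spaces, $s>0$, let $f\colon X\to Y$ be Lipschitz with $\mathcal{H}^s(X)<\infty$, and suppose that for every Borel set $W\subset X$ with $\mathcal{H}^s(W)>0$ one has $\mathcal{H}^s(f(W))>0$. Then for every Borel set $V_1\subset X$ and $\mathcal{H}^s$-almost every $x\in V_1$, the set $\{x'\in V_1 : f(x')=f(x)\}$ is finite. -/

import Mathlib

open MeasureTheory Metric Filter Set
open scoped ENNReal Topology NNReal

private lemma claimA {X Y : Type*} [MetricSpace X] [MeasurableSpace X] [BorelSpace X]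
    [MetricSpace Y] [MeasurableSpace Y] [BorelSpace Y]
    {s : ℝ} (hs : 0 < s) {f : X → Y} {L : ℝ≥0} (hL : LipschitzWith L f)
    (hfin : μH[s] (Set.univ : Set X) < ∞) (m : ℕ) (δ : ℝ≥0∞) (hδ : 0 < δ) :
    (m : ℝ≥0∞) * μH[s] {y : Y | ∃ T : Finset X, ↑T ⊆ f ⁻¹' {y} ∧ T.card = m ∧
        ∀ x ∈ T, ∀ x' ∈ T, x ≠ x' → δ < edist x x'}
      ≤ (L : ℝ≥0∞) ^ s * μH[s] (Set.univ : Set X) := by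
  classical
  -- get a countable cover with small diameters
  have hcov : ∃ t : ℕ → Set X, (Set.univ ⊆ ⋃ n, t n) ∧ ∀ n, EMetric.diam (t n) ≤ δ := by
    by_contra hc
    push_neg at hc
    have htop : (⨅ (t : ℕ → Set X) (_ : (Set.univ : Set X) ⊆ ⋃ n, t n)
        (_ : ∀ n, EMetric.diam (t n) ≤ δ),
          ∑' n, ⨆ _ : (t n).Nonempty, EMetric.diam (t n) ^ s) = ∞ := by
      simp only [iInf_eq_top]
      intro t h1 h2
      obtain ⟨n, hn⟩ := hc t h1
      exact absurd (h2 n) (not_le.mpr hn)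
    have hle : (⨅ (t : ℕ → Set X) (_ : (Set.univ : Set X) ⊆ ⋃ n, t n)
        (_ : ∀ n, EMetric.diam (t n) ≤ δ),
          ∑' n, ⨆ _ : (t n).Nonempty, EMetric.diam (t n) ^ s) ≤ μH[s] (Set.univ : Set X) := by
      rw [MeasureTheory.Measure.hausdorffMeasure_apply]
      exact le_iSup₂ (f := fun (r : ℝ≥0∞) (_ : 0 < r) =>
        ⨅ (t : ℕ → Set X) (_ : (Set.univ : Set X) ⊆ ⋃ n, t n)
          (_ : ∀ n, EMetric.diam (t n) ≤ r),
            ∑' n, ⨆ _ : (t n).Nonempty, EMetric.diam (t n) ^ s) δ hδ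
    rw [htop] at hle
    exact absurd (lt_of_le_of_lt hle hfin) (lt_irrefl _)
  obtain ⟨t, h1, h2⟩ := hcov
  set E : ℕ → Set X := disjointed (fun n => closure (t n)) with hE
  have hEmeas : ∀ n, MeasurableSet (E n) :=
    MeasurableSet.disjointed fun n => isClosed_closure.measurableSet
  have hEdisj : Pairwise (Function.onFun Disjoint E) := disjoint_disjointed _
  have hEdiam : ∀ n, EMetric.diam (E n) ≤ δ := fun n => by
    refine le_trans (EMetric.diam_mono (disjointed_subset _ n)) ?_
    rw [EMetric.diam_closure]; exact h2 n
  have hEunion : (⋃ n, E n) = Set.univ := by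
    rw [hE, iUnion_disjointed]
    exact Set.eq_univ_of_univ_subset (h1.trans (Set.iUnion_mono fun n => subset_closure))
  set A : ℕ → Set Y := fun n => toMeasurable (μH[s] : Measure Y) (f '' E n) with hA
  have hgmeas : Measurable (fun y => ∑' n, (A n).indicator (1 : Y → ℝ≥0∞) y) :=
    Measurable.ennreal_tsum fun n => measurable_one.indicator (measurableSet_toMeasurable _ _)
  have hint : ∫⁻ y, ∑' n, (A n).indicator (1 : Y → ℝ≥0∞) y ∂(μH[s] : Measure Y)
      = ∑' n, μH[s] (A n) := by
    rw [lintegral_tsum fun n =>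
      (measurable_one.indicator (measurableSet_toMeasurable _ _)).aemeasurable]
    exact tsum_congr fun n => lintegral_indicator_one (measurableSet_toMeasurable _ _)
  have hbound : ∑' n, μH[s] (A n) ≤ (L : ℝ≥0∞) ^ s * μH[s] (Set.univ : Set X) := by
    calc ∑' n, μH[s] (A n) = ∑' n, μH[s] (f '' E n) :=
          tsum_congr fun n => measure_toMeasurable _
      _ ≤ ∑' n, (L : ℝ≥0∞) ^ s * μH[s] (E n) :=
          ENNReal.tsum_le_tsum fun n => hL.hausdorffMeasure_image_le hs.le (E n)
      _ = (L : ℝ≥0∞) ^ s * ∑' n, μH[s] (E n) := ENNReal.tsum_mul_left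
      _ = (L : ℝ≥0∞) ^ s * μH[s] (Set.univ : Set X) := by
          rw [← measure_iUnion hEdisj hEmeas, hEunion]
  have hmem : {y : Y | ∃ T : Finset X, ↑T ⊆ f ⁻¹' {y} ∧ T.card = m ∧
      ∀ x ∈ T, ∀ x' ∈ T, x ≠ x' → δ < edist x x'} ⊆ {y | (m : ℝ≥0∞) ≤ ∑' n, (A n).indicator (1 : Y → ℝ≥0∞) y} := by
    rintro y ⟨T, hTsub, hTcard, hTsep⟩
    have hx : ∀ x : X, ∃ n, x ∈ E n := fun x => by
      have : x ∈ ⋃ n, E n := hEunion ▸ Set.mem_univ x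
      exact Set.mem_iUnion.mp this
    choose ι hι using hx
    have hinj : Set.InjOn ι ↑T := by
      intro a ha b hb hab
      by_contra hne
      have h1 : edist a b ≤ EMetric.diam (E (ι a)) :=
        EMetric.edist_le_diam_of_mem (hι a) (hab ▸ hι b)
      exact absurd (h1.trans (hEdiam _)) (not_le.mpr (hTsep a ha b hb hne))
    have hcard : (T.image ι).card = m := by
      rw [Finset.card_image_of_injOn hinj, hTcard]
    have hone : ∀ n ∈ T.image ι, (A n).indicator (1 : Y → ℝ≥0∞) y = 1 := by
      intro n hn
      obtain ⟨x, hxT, rfl⟩ := Finset.mem_image.mp hn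
      have hyx : f x = y := hTsub hxT
      have hmemA : y ∈ A (ι x) := subset_toMeasurable _ _ ⟨x, hι x, hyx⟩
      simp [Set.indicator_of_mem hmemA]
    have hsum : ∑ n ∈ T.image ι, (A n).indicator (1 : Y → ℝ≥0∞) y = m := by
      rw [Finset.sum_congr rfl hone, Finset.sum_const, hcard, nsmul_eq_mul, mul_one]
    show (m : ℝ≥0∞) ≤ ∑' n, (A n).indicator (1 : Y → ℝ≥0∞) y
    calc (m : ℝ≥0∞) = ∑ n ∈ T.image ι, (A n).indicator (1 : Y → ℝ≥0∞) y := hsum.symm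
      _ ≤ ∑' n, (A n).indicator (1 : Y → ℝ≥0∞) y := ENNReal.sum_le_tsum _
  calc (m : ℝ≥0∞) * μH[s] {y : Y | ∃ T : Finset X, ↑T ⊆ f ⁻¹' {y} ∧ T.card = m ∧
        ∀ x ∈ T, ∀ x' ∈ T, x ≠ x' → δ < edist x x'}
      ≤ (m : ℝ≥0∞) * μH[s] {y | (m : ℝ≥0∞) ≤ ∑' n, (A n).indicator (1 : Y → ℝ≥0∞) y} := by
        exact mul_le_mul_right (measure_mono hmem) _
    _ ≤ ∫⁻ y, ∑' n, (A n).indicator (1 : Y → ℝ≥0∞) y ∂(μH[s] : Measure Y) :=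
        mul_meas_ge_le_lintegral₀ hgmeas.aemeasurable _
    _ ≤ (L : ℝ≥0∞) ^ s * μH[s] (Set.univ : Set X) := hint ▸ hbound

private lemma claimB {X Y : Type*} [MetricSpace X] [MeasurableSpace X] [BorelSpace X]
    [MetricSpace Y] [MeasurableSpace Y] [BorelSpace Y]
    {s : ℝ} (hs : 0 < s) {f : X → Y} {L : ℝ≥0} (hL : LipschitzWith L f)
    (hfin : μH[s] (Set.univ : Set X) < ∞) :
    μH[s] {y : Y | (f ⁻¹' {y}).Infinite} = 0 := by
  classical
  set C : ℝ≥0∞ := (L : ℝ≥0∞) ^ s * μH[s] (Set.univ : Set X) with hCdef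
  have hC : C ≠ ∞ :=
    ENNReal.mul_ne_top (ENNReal.rpow_ne_top_of_nonneg hs.le ENNReal.coe_ne_top) hfin.ne
  set Nset : ℕ → ℝ≥0∞ → Set Y := fun m δ => {y : Y | ∃ T : Finset X, ↑T ⊆ f ⁻¹' {y} ∧
      T.card = m ∧ ∀ x ∈ T, ∀ x' ∈ T, x ≠ x' → δ < edist x x'} with hNset
  have key : ∀ m : ℕ, ((m : ℝ≥0∞) + 1) * μH[s] {y : Y | (f ⁻¹' {y}).Infinite} ≤ C := by
    intro m
    have hsub : {y : Y | (f ⁻¹' {y}).Infinite} ⊆ ⋃ k : ℕ, Nset (m + 1) ((k : ℝ≥0∞))⁻¹ := by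
      intro y hy
      obtain ⟨T₀, hT₀sub, hT₀fin, hT₀card⟩ := Set.Infinite.exists_subset_ncard_eq hy (m + 1)
      set T : Finset X := hT₀fin.toFinset with hT
      have hTsub : ↑T ⊆ f ⁻¹' {y} := by rwa [hT, Set.Finite.coe_toFinset]
      have hTcard : T.card = m + 1 := by
        rw [hT, ← Set.ncard_coe_finset, Set.Finite.coe_toFinset]; exact hT₀card
      by_cases hne : T.offDiag.Nonempty
      · set e : ℝ≥0∞ := T.offDiag.inf' hne (fun p => edist p.1 p.2) with he
        have hepos : 0 < e := by
          rw [he, Finset.lt_inf'_iff]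
          intro p hp
          exact edist_pos.mpr (Finset.mem_offDiag.mp hp).2.2
        obtain ⟨k, hk⟩ := ENNReal.exists_inv_nat_lt hepos.ne'
        refine Set.mem_iUnion.mpr ⟨k, T, hTsub, hTcard, fun x hx x' hx' hxx' => ?_⟩
        refine lt_of_lt_of_le hk ?_
        have hpmem : (x, x') ∈ T.offDiag := Finset.mem_offDiag.mpr ⟨hx, hx', hxx'⟩
        rw [he]
        exact Finset.inf'_le (fun p => edist p.1 p.2) hpmem
      · refine Set.mem_iUnion.mpr ⟨0, T, hTsub, hTcard, fun x hx x' hx' hxx' => ?_⟩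
        have hpmem : (x, x') ∈ T.offDiag := Finset.mem_offDiag.mpr ⟨hx, hx', hxx'⟩
        exact absurd ⟨(x, x'), hpmem⟩ hne
    have hmono : Monotone (fun k : ℕ => Nset (m + 1) ((k : ℝ≥0∞))⁻¹) := by
      intro k k' hkk' y hy
      obtain ⟨T, h1, h2, h3⟩ := hy
      exact ⟨T, h1, h2, fun x hx x' hx' hxx' =>
        lt_of_le_of_lt (ENNReal.inv_le_inv.mpr (by exact_mod_cast hkk')) (h3 x hx x' hx' hxx')⟩
    have hA : ∀ k : ℕ, ((m : ℝ≥0∞) + 1) * μH[s] (Nset (m + 1) ((k : ℝ≥0∞))⁻¹) ≤ C := by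
      intro k
      have := claimA hs hL hfin (m + 1) ((k : ℝ≥0∞))⁻¹ (ENNReal.inv_pos.mpr (by simp))
      rwa [Nat.cast_add, Nat.cast_one] at this
    calc ((m : ℝ≥0∞) + 1) * μH[s] {y : Y | (f ⁻¹' {y}).Infinite}
        ≤ ((m : ℝ≥0∞) + 1) * μH[s] (⋃ k : ℕ, Nset (m + 1) ((k : ℝ≥0∞))⁻¹) := by
          exact mul_le_mul_right (measure_mono hsub) _
      _ = ((m : ℝ≥0∞) + 1) * ⨆ k : ℕ, μH[s] (Nset (m + 1) ((k : ℝ≥0∞))⁻¹) := by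
          rw [hmono.measure_iUnion]
      _ = ⨆ k : ℕ, ((m : ℝ≥0∞) + 1) * μH[s] (Nset (m + 1) ((k : ℝ≥0∞))⁻¹) := by
          rw [ENNReal.mul_iSup]
      _ ≤ C := iSup_le hA
  by_contra hμ
  rcases eq_or_ne (μH[s] {y : Y | (f ⁻¹' {y}).Infinite} : ℝ≥0∞) ∞ with htop | hfin'
  · have := key 0
    rw [htop] at this
    simp [ENNReal.mul_top] at this
    exact hC this
  · obtain ⟨m, hm⟩ := ENNReal.exists_nat_gt (ENNReal.div_lt_top hC hμ).ne
    have hlt : C < (m : ℝ≥0∞) * μH[s] {y : Y | (f ⁻¹' {y}).Infinite} :=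
      (ENNReal.div_lt_iff (Or.inl hμ) (Or.inl hfin')).mp hm
    have hle : (m : ℝ≥0∞) * μH[s] {y : Y | (f ⁻¹' {y}).Infinite} ≤ C := by
      exact le_trans (mul_le_mul_left le_self_add _) (key m)
    exact absurd (hlt.trans_le hle) (lt_irrefl _)

/-- If `f` is Lipschitz on a complete metric space with `μH[s] X < ∞` and maps Borel sets
of positive measure to sets of positive measure, then for every Borel `V₁` and
`μH[s]`-a.e. `x ∈ V₁`, the fibre `{x' ∈ V₁ : f x' = f x}` is finite. -/
theorem ae_finite_fibres
    {X Y : Type*} [MetricSpace X] [CompleteSpace X] [MeasurableSpace X] [BorelSpace X]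
    [MetricSpace Y] [CompleteSpace Y] [MeasurableSpace Y] [BorelSpace Y]
    {s : ℝ} (hs : 0 < s) (f : X → Y)
    (hlip : ∃ L : ℝ≥0, LipschitzWith L f)
    (hfin : μH[s] (Set.univ : Set X) < ∞)
    (hpos : ∀ W : Set X, MeasurableSet W → 0 < μH[s] W → 0 < μH[s] (f '' W)) :
    ∀ V₁ : Set X, MeasurableSet V₁ →
      ∀ᵐ x ∂(μH[s] : Measure X), x ∈ V₁ →
        {x' ∈ V₁ | f x' = f x}.Finite := by
  intro V₁ hV₁
  obtain ⟨L, hL⟩ := hlip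
  have hN : μH[s] {y : Y | (f ⁻¹' {y}).Infinite} = 0 := claimB hs hL hfin
  set M : Set Y := toMeasurable (μH[s] : Measure Y) {y : Y | (f ⁻¹' {y}).Infinite} with hM
  have hWnull : μH[s] (V₁ ∩ f ⁻¹' M) = 0 := by
    by_contra h
    have hpos' := hpos _ (hV₁.inter (hL.continuous.measurable (measurableSet_toMeasurable _ _)))
      (zero_lt_iff.mpr h)
    have himg : f '' (V₁ ∩ f ⁻¹' M) ⊆ M := by
      rintro y ⟨x, hx, rfl⟩
      exact hx.2
    have hle : μH[s] (f '' (V₁ ∩ f ⁻¹' M)) ≤ μH[s] M := measure_mono himg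
    rw [hM, measure_toMeasurable, hN] at hle
    exact absurd (lt_of_lt_of_le hpos' hle) (lt_irrefl _)
  rw [ae_iff]
  refine measure_mono_null ?_ hWnull
  intro x hx
  simp only [Set.mem_setOf_eq, Classical.not_imp] at hx
  refine ⟨hx.1, subset_toMeasurable _ _ ?_⟩
  show (f ⁻¹' {f x}).Infinite
  exact Set.Infinite.mono (fun x' hx' => hx'.2) hx.2
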